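/- Fix positive integers m, n, r and a real m × n matrix G. Define f : ℝ^{n×r} → ℝ by f(P) = (1/(m·n)) · tr((G P Pᵀ − G)ᵀ (G P Pᵀ − G)). Then f is Fréchet differentiable at every P, and its derivative at P in the direction H ∈ ℝ^{n×r} is (2/(m·n)) · tr(Hᵀ (Ĝᵀ G P − 2 Gᵀ G P + Gᵀ Ĝ P)), where Ĝ = G P Pᵀ. Equivalently, the gradient of f with respect to P (in the Frobenius inner product) is (2/(m·n)) (Ĝᵀ G P − 2 Gᵀ G P + Gᵀ Ĝ P). -/

import Mathlib

open Matrix BigOperators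

attribute [local instance] Matrix.normedAddCommGroup Matrix.normedSpace

noncomputable def mulCLM (a b c : ℕ) :
    Matrix (Fin a) (Fin b) ℝ →L[ℝ] Matrix (Fin b) (Fin c) ℝ →L[ℝ] Matrix (Fin a) (Fin c) ℝ :=
  LinearMap.toContinuousLinearMap
    { toFun := fun X => LinearMap.toContinuousLinearMap
        { toFun := fun Y => X * Y
          map_add' := fun Y Z => Matrix.mul_add X Y Z
          map_smul' := fun c Y => (Matrix.mul_smul X c Y) }
      map_add' := fun X Y => by
        apply ContinuousLinearMap.ext; intro Z
        simp [Matrix.add_mul]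
      map_smul' := fun c X => by
        apply ContinuousLinearMap.ext; intro Z
        simp [Matrix.smul_mul] }

@[simp] lemma mulCLM_apply {a b c : ℕ} (X : Matrix (Fin a) (Fin b) ℝ)
    (Y : Matrix (Fin b) (Fin c) ℝ) : mulCLM a b c X Y = X * Y := rfl

noncomputable def traceFormCLM (a b : ℕ) :
    Matrix (Fin a) (Fin b) ℝ →L[ℝ] Matrix (Fin a) (Fin b) ℝ →L[ℝ] ℝ :=
  LinearMap.toContinuousLinearMap
    { toFun := fun X => LinearMap.toContinuousLinearMap
        { toFun := fun Y => Matrix.trace (Xᵀ * Y)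
          map_add' := fun Y Z => by simp [Matrix.mul_add]
          map_smul' := fun c Y => by simp [Matrix.mul_smul] }
      map_add' := fun X Y => by
        apply ContinuousLinearMap.ext; intro Z
        simp [Matrix.add_mul, Matrix.transpose_add]
      map_smul' := fun c X => by
        apply ContinuousLinearMap.ext; intro Z
        simp [Matrix.smul_mul, Matrix.transpose_smul] }

@[simp] lemma traceFormCLM_apply {a b : ℕ} (X Y : Matrix (Fin a) (Fin b) ℝ) :
    traceFormCLM a b X Y = Matrix.trace (Xᵀ * Y) := rfl

noncomputable def transposeCLM (a b : ℕ) :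
    Matrix (Fin a) (Fin b) ℝ →L[ℝ] Matrix (Fin b) (Fin a) ℝ :=
  LinearMap.toContinuousLinearMap
    { toFun := fun X => Xᵀ
      map_add' := fun X Y => Matrix.transpose_add X Y
      map_smul' := fun c X => Matrix.transpose_smul c X }

@[simp] lemma transposeCLM_apply {a b : ℕ} (X : Matrix (Fin a) (Fin b) ℝ) :
    transposeCLM a b X = Xᵀ := rfl


lemma traceKey {α β γ : Type*} [Fintype α] [Fintype β] [Fintype γ]
    (A : Matrix α β ℝ) (H : Matrix β γ ℝ) (C : Matrix γ α ℝ) :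
    (A * H * C).trace = (Hᵀ * (Aᵀ * Cᵀ)).trace := by
  calc (A * H * C).trace = ((A * H * C)ᵀ).trace := (Matrix.trace_transpose _).symm
    _ = (Cᵀ * (Hᵀ * Aᵀ)).trace := by simp [Matrix.transpose_mul, Matrix.mul_assoc]
    _ = (Hᵀ * Aᵀ * Cᵀ).trace := Matrix.trace_mul_comm _ _
    _ = (Hᵀ * (Aᵀ * Cᵀ)).trace := by rw [Matrix.mul_assoc]

lemma traceKeyT {α β γ : Type*} [Fintype α] [Fintype β] [Fintype γ]
    (A : Matrix α β ℝ) (H : Matrix γ β ℝ) (C : Matrix γ α ℝ) :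
    (A * (Hᵀ * C)).trace = (Hᵀ * (C * A)).trace := by
  rw [Matrix.trace_mul_comm, Matrix.mul_assoc]

lemma traceKeyH {α β : Type*} [Fintype α] [Fintype β]
    (H : Matrix α β ℝ) (C : Matrix β α ℝ) :
    (H * C).trace = (Hᵀ * Cᵀ).trace := by
  calc (H * C).trace = ((H * C)ᵀ).trace := (Matrix.trace_transpose _).symm
    _ = (Cᵀ * Hᵀ).trace := by rw [Matrix.transpose_mul]
    _ = (Hᵀ * Cᵀ).trace := Matrix.trace_mul_comm _ _

/-- The reconstruction term `f(P) = MSE(G P Pᵀ, G) = (1/(m n)) tr((G P Pᵀ − G)ᵀ (G P Pᵀ − G))`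
is Fréchet differentiable at every `P`, with derivative in the direction `H` equal to
`(2/(m n)) tr(Hᵀ (Ĝᵀ G P − 2 Gᵀ G P + Gᵀ Ĝ P))` where `Ĝ = G P Pᵀ`; equivalently, its
gradient in the Frobenius inner product is `(2/(m n)) (Ĝᵀ G P − 2 Gᵀ G P + Gᵀ Ĝ P)`. -/
theorem hasFDerivAt_mse_reconstruction
    {m n r : ℕ} (hm : 0 < m) (hn : 0 < n)
    (G : Matrix (Fin m) (Fin n) ℝ)
    (P : Matrix (Fin n) (Fin r) ℝ) :
    ∃ f' : Matrix (Fin n) (Fin r) ℝ →L[ℝ] ℝ,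
      HasFDerivAt
        (fun P : Matrix (Fin n) (Fin r) ℝ =>
          (1 / ((m : ℝ) * (n : ℝ))) *
            Matrix.trace ((G * P * Pᵀ - G)ᵀ * (G * P * Pᵀ - G)))
        f' P ∧
      ∀ H : Matrix (Fin n) (Fin r) ℝ,
        f' H =
          (2 / ((m : ℝ) * (n : ℝ))) *
            Matrix.trace (Hᵀ *
              ((G * P * Pᵀ)ᵀ * G * P - (2 : ℝ) • (Gᵀ * G * P) + Gᵀ * (G * P * Pᵀ) * P)) := by
  classical
  -- F P = G * P * Pᵀ - G
  set E := G * P * Pᵀ - G with hE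
  -- derivative of P ↦ (G*P, Pᵀ)
  have hℓ : HasFDerivAt (fun Q : Matrix (Fin n) (Fin r) ℝ => (G * Q, Qᵀ))
      (((mulCLM m n r G).prod (transposeCLM n r))) P :=
    (HasFDerivAt.prodMk ((mulCLM m n r G).hasFDerivAt) ((transposeCLM n r).hasFDerivAt))
  have hbil := (mulCLM m r n).isBoundedBilinearMap
  have hF : HasFDerivAt (fun Q : Matrix (Fin n) (Fin r) ℝ => G * Q * Qᵀ - G)
      (((hbil.deriv (G * P, Pᵀ)).comp ((mulCLM m n r G).prod (transposeCLM n r)))) P := by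
    have := ((hbil.hasFDerivAt (G * P, Pᵀ)).comp P hℓ).sub_const G
    exact this
  set F' := ((hbil.deriv (G * P, Pᵀ)).comp ((mulCLM m n r G).prod (transposeCLM n r)))
  have htr := (traceFormCLM m n).isBoundedBilinearMap
  have hG : HasFDerivAt (fun Q : Matrix (Fin n) (Fin r) ℝ =>
      Matrix.trace ((G * Q * Qᵀ - G)ᵀ * (G * Q * Qᵀ - G)))
      ((htr.deriv (E, E)).comp (F'.prod F')) P := by
    have := (htr.hasFDerivAt (E, E)).comp P (HasFDerivAt.prodMk hF hF)
    exact this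
  have hf := hG.const_mul (1 / ((m : ℝ) * (n : ℝ)))
  refine ⟨_, hf, ?_⟩
  intro H
  have hF'H : F' H = G * H * Pᵀ + G * P * Hᵀ := by
    simp only [F', ContinuousLinearMap.comp_apply, ContinuousLinearMap.prod_apply,
      IsBoundedBilinearMap.deriv_apply, mulCLM_apply, transposeCLM_apply]
    exact add_comm _ _
  change (1 / ((m : ℝ) * (n : ℝ))) * (Matrix.trace (Eᵀ * F' H) + Matrix.trace ((F' H)ᵀ * E)) = _
  simp only [ContinuousLinearMap.smul_apply,
    ContinuousLinearMap.comp_apply, ContinuousLinearMap.prod_apply,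
    IsBoundedBilinearMap.deriv_apply, hF'H, traceFormCLM_apply, smul_eq_mul]
  rw [hE]
  simp only [Matrix.transpose_add, Matrix.transpose_sub, Matrix.transpose_mul,
    Matrix.transpose_transpose, Matrix.add_mul, Matrix.sub_mul, Matrix.mul_sub,
    Matrix.mul_add, Matrix.trace_add, Matrix.trace_sub, Matrix.smul_mul, Matrix.trace_smul,
    smul_eq_mul]
  rw [show P * (Pᵀ * Gᵀ) * (G * H * Pᵀ) = (P * (Pᵀ * Gᵀ) * G) * H * Pᵀ by
        simp only [Matrix.mul_assoc],
      traceKey (P * (Pᵀ * Gᵀ) * G) H Pᵀ,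
      show Gᵀ * (G * H * Pᵀ) = (Gᵀ * G) * H * Pᵀ by simp only [Matrix.mul_assoc],
      traceKey (Gᵀ * G) H Pᵀ,
      show P * (Pᵀ * Gᵀ) * (G * P * Hᵀ) = (P * (Pᵀ * Gᵀ) * (G * P)) * Hᵀ by
        simp only [Matrix.mul_assoc],
      Matrix.trace_mul_comm (P * (Pᵀ * Gᵀ) * (G * P)) Hᵀ,
      show Gᵀ * (G * P * Hᵀ) = (Gᵀ * (G * P)) * Hᵀ by simp only [Matrix.mul_assoc],
      Matrix.trace_mul_comm (Gᵀ * (G * P)) Hᵀ,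
      show P * (Hᵀ * Gᵀ) * (G * P * Pᵀ) = P * (Hᵀ * (Gᵀ * (G * P * Pᵀ))) by
        simp only [Matrix.mul_assoc],
      traceKeyT P H (Gᵀ * (G * P * Pᵀ)),
      show H * (Pᵀ * Gᵀ) * (G * P * Pᵀ) = H * (Pᵀ * Gᵀ * (G * P * Pᵀ)) by
        simp only [Matrix.mul_assoc],
      traceKeyH H (Pᵀ * Gᵀ * (G * P * Pᵀ)),
      show P * (Hᵀ * Gᵀ) * G = P * (Hᵀ * (Gᵀ * G)) by simp only [Matrix.mul_assoc],
      traceKeyT P H (Gᵀ * G),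
      show H * (Pᵀ * Gᵀ) * G = H * (Pᵀ * Gᵀ * G) by simp only [Matrix.mul_assoc],
      traceKeyH H (Pᵀ * Gᵀ * G)]
  simp only [Matrix.transpose_mul, Matrix.transpose_transpose, Matrix.mul_smul,
    Matrix.trace_smul, smul_eq_mul, Matrix.mul_assoc]
  ring
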